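/- For any r×c real payoff matrix M with entries in [0,1], any ε > 0, and any k ≥ ln(c)/(2ε²), there exists a multiset S of k rows (with repetition allowed) such that for every column j, the average (1/k)·Σ_{i∈S} M_{i,j} is at most v + ε, where v = min_p max_j Σ_i p(i) M_{i,j} is the value of the game (minimum over probability distributions p on rows). -/

import Mathlib

open Finset

-- Hoeffding's lemma core inequality
lemma key_ineq (μ t : ℝ) (h0 : 0 ≤ μ) (h1 : μ ≤ 1) (ht : 0 ≤ t) :
    1 - μ + μ * Real.exp t ≤ Real.exp (t * μ + t ^ 2 / 8) := by
  have hD : ∀ s : ℝ, 0 < 1 - μ + μ * Real.exp s := by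
    intro s
    rcases eq_or_lt_of_le h0 with h | h
    · simp [← h]
    · nlinarith [Real.exp_pos s, mul_pos h (Real.exp_pos s)]
  set f : ℝ → ℝ := fun s => s * μ + s ^ 2 / 8 - Real.log (1 - μ + μ * Real.exp s) with hf_def
  set g : ℝ → ℝ := fun s => μ + s / 4 - μ * Real.exp s / (1 - μ + μ * Real.exp s) with hg_def
  have hDd : ∀ s : ℝ, HasDerivAt (fun s => 1 - μ + μ * Real.exp s) (μ * Real.exp s) s := by
    intro s
    exact ((Real.hasDerivAt_exp s).const_mul μ).const_add (1 - μ)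
  have hf' : ∀ s : ℝ, HasDerivAt f (g s) s := by
    intro s
    have h1' : HasDerivAt (fun s : ℝ => s * μ + s ^ 2 / 8) (μ + s / 4) s := by
      have := ((hasDerivAt_id s).mul_const μ).add ((hasDerivAt_pow 2 s).div_const 8)
      exact this.congr_deriv (by norm_num; ring)
    have h2' : HasDerivAt (fun s => Real.log (1 - μ + μ * Real.exp s))
        (μ * Real.exp s / (1 - μ + μ * Real.exp s)) s := (hDd s).log (ne_of_gt (hD s))
    exact h1'.sub h2'
  have hg' : ∀ s : ℝ, HasDerivAt g
      (1 / 4 - μ * Real.exp s * (1 - μ) / (1 - μ + μ * Real.exp s) ^ 2) s := by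
    intro s
    have hq : HasDerivAt (fun s => μ * Real.exp s / (1 - μ + μ * Real.exp s))
        ((μ * Real.exp s * (1 - μ + μ * Real.exp s) - μ * Real.exp s * (μ * Real.exp s)) /
          (1 - μ + μ * Real.exp s) ^ 2) s :=
      ((Real.hasDerivAt_exp s).const_mul μ).div (hDd s) (ne_of_gt (hD s))
    have hl : HasDerivAt (fun s : ℝ => μ + s / 4) (1 / 4) s := by
      simpa using ((hasDerivAt_id s).div_const 4).const_add μ
    have := hl.sub hq
    refine this.congr_deriv ?_
    have hD2 : (1 - μ + μ * Real.exp s) ^ 2 ≠ 0 := pow_ne_zero 2 (ne_of_gt (hD s))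
    ring
  have hgd : ∀ s : ℝ, 0 ≤ 1 / 4 - μ * Real.exp s * (1 - μ) / (1 - μ + μ * Real.exp s) ^ 2 := by
    intro s
    rw [sub_nonneg, div_le_iff₀ (pow_pos (hD s) 2)]
    nlinarith [sq_nonneg ((1 - μ) - μ * Real.exp s), Real.exp_pos s]
  have gmono : Monotone g := by
    apply monotone_of_deriv_nonneg
    · exact fun s => (hg' s).differentiableAt
    · intro s
      rw [(hg' s).deriv]
      exact hgd s
  have hg0 : g 0 = 0 := by
    simp [hg_def]
  have hgpos : ∀ s, 0 ≤ s → 0 ≤ g s := fun s hs => hg0 ▸ gmono hs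
  have fmono : MonotoneOn f (Set.Ici 0) := by
    apply monotoneOn_of_deriv_nonneg (convex_Ici 0)
    · exact (Differentiable.continuous (fun s => (hf' s).differentiableAt)).continuousOn
    · intro s _
      exact ((hf' s).differentiableAt).differentiableWithinAt
    · intro s hs
      rw [(hf' s).deriv]
      exact hgpos s (le_of_lt (by simpa using hs))
  have hf0 : f 0 = 0 := by simp [hf_def]
  have hft : 0 ≤ f t := by
    have := fmono (Set.self_mem_Ici) (by exact ht) ht
    rw [hf0] at this; exact this
  have hlog : Real.log (1 - μ + μ * Real.exp t) ≤ t * μ + t ^ 2 / 8 := by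
    simp only [hf_def] at hft; linarith
  calc 1 - μ + μ * Real.exp t = Real.exp (Real.log (1 - μ + μ * Real.exp t)) :=
        (Real.exp_log (hD t)).symm
    _ ≤ Real.exp (t * μ + t ^ 2 / 8) := Real.exp_le_exp.mpr hlog

lemma chord (x t : ℝ) (hx0 : 0 ≤ x) (hx1 : x ≤ 1) :
    Real.exp (t * x) ≤ 1 - x + x * Real.exp t := by
  have := convexOn_exp.2 (Set.mem_univ (0:ℝ)) (Set.mem_univ t)
    (by linarith : (0:ℝ) ≤ 1 - x) hx0 (by ring)
  simpa [mul_comm] using this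

lemma sum_exp_le {r : ℕ} (p x : Fin r → ℝ) (hp0 : ∀ i, 0 ≤ p i)
    (hp1 : ∑ i, p i = 1) (hx : ∀ i, 0 ≤ x i ∧ x i ≤ 1) (t : ℝ) (ht : 0 ≤ t) :
    ∑ i, p i * Real.exp (t * x i) ≤ Real.exp (t * (∑ i, p i * x i) + t ^ 2 / 8) := by
  set μ := ∑ i, p i * x i with hμ
  have hμ0 : 0 ≤ μ := Finset.sum_nonneg fun i _ => mul_nonneg (hp0 i) (hx i).1
  have hμ1 : μ ≤ 1 := by
    calc μ ≤ ∑ i, p i := Finset.sum_le_sum fun i _ => by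
            nlinarith [(hx i).2, hp0 i]
      _ = 1 := hp1
  calc ∑ i, p i * Real.exp (t * x i)
      ≤ ∑ i, p i * (1 - x i + x i * Real.exp t) := by
        apply Finset.sum_le_sum
        intro i _
        exact mul_le_mul_of_nonneg_left (chord (x i) t (hx i).1 (hx i).2) (hp0 i)
    _ = 1 - μ + μ * Real.exp t := by
        have h1 : ∑ i, p i * (1 - x i + x i * Real.exp t)
            = (∑ i, p i) - (∑ i, p i * x i) + (∑ i, p i * x i) * Real.exp t := by
          rw [Finset.sum_mul, ← Finset.sum_sub_distrib, ← Finset.sum_add_distrib]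
          exact Finset.sum_congr rfl fun i _ => by ring
        rw [h1, hp1, ← hμ]
    _ ≤ Real.exp (t * μ + t ^ 2 / 8) := key_ineq μ t hμ0 hμ1 ht

set_option maxHeartbeats 1000000 in
open Finset in
lemma exists_good {r c : ℕ} (hc : 0 < c) (M : Fin r → Fin c → ℝ)
    (hM : ∀ i j, M i j ∈ Set.Icc (0:ℝ) 1) (ε : ℝ) (hε : 0 < ε) (k : ℕ) (hk : 0 < k)
    (hlog : Real.log c ≤ 2 * ε ^ 2 * k)
    (p : Fin r → ℝ) (hp0 : ∀ i, 0 ≤ p i) (hp1 : ∑ i, p i = 1) :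
    ∃ S : Fin k → Fin r, ∀ j, (1 / k : ℝ) * ∑ m, M (S m) j ≤ (∑ i, p i * M i j) + ε := by
  have hr : 0 < r := by
    rcases Nat.eq_zero_or_pos r with h | h
    · subst h; simp at hp1
    · exact h
  have : Nonempty (Fin r) := ⟨⟨0, hr⟩⟩
  set t : ℝ := 4 * ε with ht_def
  have ht : 0 < t := by positivity
  set w : (Fin k → Fin r) → ℝ := fun S => ∏ m, p (S m) with hw_def
  set μ : Fin c → ℝ := fun j => ∑ i, p i * M i j with hμ_def
  set G : (Fin k → Fin r) → ℝ :=
    fun S => ∑ j, Real.exp (t * (∑ m, M (S m) j) - t * k * μ j) with hG_def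
  have hw0 : ∀ S, 0 ≤ w S := fun S => Finset.prod_nonneg fun m _ => hp0 (S m)
  have hwsum : ∑ S : Fin k → Fin r, w S = 1 := by
    rw [hw_def, ← Fintype.piFinset_univ,
      ← Finset.prod_univ_sum (fun _ => Finset.univ) (fun (_ : Fin k) i => p i)]
    simp [hp1]
  set B : ℝ := c * Real.exp (k * t ^ 2 / 8) with hB_def
  -- the expectation bound
  have hexp : ∑ S : Fin k → Fin r, w S * G S ≤ B := by
    have key : ∀ j : Fin c,
        ∑ S : Fin k → Fin r, w S * Real.exp (t * (∑ m, M (S m) j) - t * k * μ j)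
          ≤ Real.exp (k * t ^ 2 / 8) := by
      intro j
      have step1 : ∀ S : Fin k → Fin r, w S * Real.exp (t * (∑ m, M (S m) j))
          = ∏ m, (p (S m) * Real.exp (t * M (S m) j)) := by
        intro S
        rw [Finset.mul_sum, Real.exp_sum, hw_def, ← Finset.prod_mul_distrib]
      have step2 : ∑ S : Fin k → Fin r, w S * Real.exp (t * (∑ m, M (S m) j))
          = (∑ i, p i * Real.exp (t * M i j)) ^ k := by
        calc ∑ S : Fin k → Fin r, w S * Real.exp (t * (∑ m, M (S m) j))
            = ∑ S : Fin k → Fin r, ∏ m, (p (S m) * Real.exp (t * M (S m) j)) :=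
              Finset.sum_congr rfl fun S _ => step1 S
          _ = ∏ _m : Fin k, ∑ i, p i * Real.exp (t * M i j) := by
              rw [← Fintype.piFinset_univ]
              exact (Finset.prod_univ_sum (fun _ => Finset.univ)
                (fun m i => p i * Real.exp (t * M i j))).symm
          _ = (∑ i, p i * Real.exp (t * M i j)) ^ k := by
              rw [Finset.prod_const, Finset.card_univ, Fintype.card_fin]
      have hmgf : (∑ i, p i * Real.exp (t * M i j)) ^ k
          ≤ Real.exp (t * μ j + t ^ 2 / 8) ^ k := by
        apply pow_le_pow_left₀
        · exact Finset.sum_nonneg fun i _ => mul_nonneg (hp0 i) (Real.exp_pos _).le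
        · exact sum_exp_le p (fun i => M i j) hp0 hp1
            (fun i => ⟨(hM i j).1, (hM i j).2⟩) t ht.le
      calc ∑ S : Fin k → Fin r, w S * Real.exp (t * (∑ m, M (S m) j) - t * k * μ j)
          = (∑ S : Fin k → Fin r, w S * Real.exp (t * (∑ m, M (S m) j)))
              * Real.exp (-(t * k * μ j)) := by
            rw [Finset.sum_mul]
            exact Finset.sum_congr rfl fun S _ => by
              rw [sub_eq_add_neg, Real.exp_add]; ring
        _ ≤ Real.exp (t * μ j + t ^ 2 / 8) ^ k * Real.exp (-(t * k * μ j)) := by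
            apply mul_le_mul_of_nonneg_right _ (Real.exp_pos _).le
            rw [step2]; exact hmgf
        _ = Real.exp (k * t ^ 2 / 8) := by
            rw [← Real.exp_nat_mul, ← Real.exp_add]
            congr 1; ring
    calc ∑ S : Fin k → Fin r, w S * G S
        = ∑ j : Fin c, ∑ S : Fin k → Fin r,
            w S * Real.exp (t * (∑ m, M (S m) j) - t * k * μ j) := by
          rw [Finset.sum_comm]
          exact Finset.sum_congr rfl fun S _ => by rw [hG_def, Finset.mul_sum]
      _ ≤ ∑ _j : Fin c, Real.exp (k * t ^ 2 / 8) := Finset.sum_le_sum fun j _ => key j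
      _ = B := by rw [Finset.sum_const, Finset.card_univ, Fintype.card_fin, hB_def,
            nsmul_eq_mul]
  -- extract a good S
  have hSex : ∃ S : Fin k → Fin r, G S ≤ B := by
    by_contra hcon
    push_neg at hcon
    obtain ⟨S0, _, hS0⟩ : ∃ S0 ∈ Finset.univ, (0:ℝ) < w S0 := by
      apply Finset.exists_lt_of_sum_lt
      simp [hwsum]
    have hlt : ∑ S : Fin k → Fin r, w S * B < ∑ S : Fin k → Fin r, w S * G S := by
      apply Finset.sum_lt_sum
      · exact fun S _ => mul_le_mul_of_nonneg_left (hcon S).le (hw0 S)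
      · exact ⟨S0, Finset.mem_univ S0, mul_lt_mul_of_pos_left (hcon S0) hS0⟩
    rw [← Finset.sum_mul, hwsum, one_mul] at hlt
    linarith
  obtain ⟨S, hS⟩ := hSex
  simp only [hG_def, hB_def] at hS
  refine ⟨S, fun j => ?_⟩
  have hterm : Real.exp (t * (∑ m, M (S m) j) - t * k * μ j)
      ≤ (c:ℝ) * Real.exp (k * t ^ 2 / 8) := by
    refine le_trans ?_ hS
    exact Finset.single_le_sum
      (f := fun j' => Real.exp (t * (∑ m, M (S m) j') - t * (k:ℝ) * μ j'))
      (fun j' _ => (Real.exp_pos _).le) (Finset.mem_univ j)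
  have hcpos : (0:ℝ) < (c:ℝ) := by exact_mod_cast hc
  have hBe : (c:ℝ) * Real.exp (k * t ^ 2 / 8) = Real.exp (Real.log c + k * t ^ 2 / 8) := by
    rw [Real.exp_add, Real.exp_log hcpos]
  rw [hBe] at hterm
  have hle : t * (∑ m, M (S m) j) - t * k * μ j ≤ Real.log c + k * t ^ 2 / 8 :=
    Real.exp_le_exp.mp hterm
  have hkpos : (0:ℝ) < (k:ℝ) := by exact_mod_cast hk
  rw [one_div, inv_mul_le_iff₀ hkpos]
  have h4 : 4 * ε * (∑ m, M (S m) j) ≤ 4 * ε * ((k:ℝ) * (μ j + ε)) := by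
    rw [ht_def] at hle
    nlinarith [hle, hlog]
  have := le_of_mul_le_mul_left h4 (by positivity : (0:ℝ) < 4 * ε)
  linarith

open Finset

theorem simple_minmax_row (r c : ℕ) (hr : 0 < r) (hc : 0 < c)
    (M : Fin r → Fin c → ℝ) (hM : ∀ i j, M i j ∈ Set.Icc (0 : ℝ) 1)
    (ε : ℝ) (hε : 0 < ε) (k : ℕ) (hk : 0 < k)
    (hkc : Real.log c / (2 * ε ^ 2) ≤ k) :
    ∃ S : Fin k → Fin r, ∀ j : Fin c,
      (1 / k : ℝ) * ∑ m, M (S m) j ≤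
        (⨅ p : stdSimplex ℝ (Fin r), ⨆ j' : Fin c, ∑ i, p.1 i * M i j') + ε := by
  have : Nonempty (Fin r) := ⟨⟨0, hr⟩⟩
  have : Nonempty (Fin c) := ⟨⟨0, hc⟩⟩
  have hlog : Real.log c ≤ 2 * ε ^ 2 * k := by
    rw [div_le_iff₀ (by positivity)] at hkc
    linarith
  have hne : Nonempty (stdSimplex ℝ (Fin r)) := by
    refine ⟨⟨fun i => if i = ⟨0, hr⟩ then 1 else 0, fun i => ?_, ?_⟩⟩
    · dsimp only; split <;> norm_num
    · simp
  -- min over strategies S of the max column average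
  set F : (Fin k → Fin r) → ℝ := fun S =>
    Finset.univ.sup' Finset.univ_nonempty (fun j : Fin c => (1 / k : ℝ) * ∑ m, M (S m) j)
    with hF_def
  set mval : ℝ := Finset.univ.inf' Finset.univ_nonempty F with hm_def
  obtain ⟨S₀, _, hS₀⟩ := Finset.exists_mem_eq_inf' (Finset.univ_nonempty) F
  have hmain : mval - ε ≤ ⨅ p : stdSimplex ℝ (Fin r), ⨆ j' : Fin c, ∑ i, p.1 i * M i j' := by
    apply le_ciInf
    intro p
    obtain ⟨S, hS⟩ := exists_good hc M hM ε hε k hk hlog p.1 (fun i => p.2.1 i) p.2.2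
    have h1 : mval ≤ F S := Finset.inf'_le F (Finset.mem_univ S)
    have h2 : F S ≤ (⨆ j' : Fin c, ∑ i, p.1 i * M i j') + ε := by
      rw [hF_def]
      apply Finset.sup'_le
      intro j _
      refine le_trans (hS j) (add_le_add_left ?_ ε)
      exact le_ciSup (f := fun j' : Fin c => ∑ i, p.1 i * M i j') (Set.Finite.bddAbove (Set.finite_range _)) j
    linarith
  obtain ⟨S₀', hS₀'⟩ : ∃ S : Fin k → Fin r, F S = mval := ⟨S₀, hS₀.symm⟩
  refine ⟨S₀', fun j => ?_⟩
  have : (1 / k : ℝ) * ∑ m, M (S₀' m) j ≤ F S₀' :=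
    Finset.le_sup' (fun j : Fin c => (1 / k : ℝ) * ∑ m, M (S₀' m) j) (Finset.mem_univ j)
  rw [hS₀'] at this
  linarith
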